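/- If P and Q are S-Motzkin paths and Q is inserted into P immediately after the k-th up step of P (for some k with 1 ≤ k ≤ number of up steps of P), or appended at the end of P, the resulting word is again an S-Motzkin path. -/

import Mathlib

inductive Step : Type
  | u : Step
  | d : Step
  | h : Step
deriving DecidableEq, Repr

def stepVal : Step → ℤ
  | Step.u => 1
  | Step.d => -1
  | Step.h => 0

/-- Sum of step values (final height) of a word. -/
def hsum (w : List Step) : ℤ := (w.map stepVal).sum

/-- All prefixes have nonnegative height. -/
def NonnegPrefixes (w : List Step) : Prop := ∀ p : List Step, p <+: w → 0 ≤ hsum p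

/-- A Motzkin path: nonnegative prefix heights and total height 0. -/
def IsMotzkin (w : List Step) : Prop := NonnegPrefixes w ∧ hsum w = 0

/-- The word (hu)^n. -/
def huWord (n : ℕ) : List Step := (List.replicate n [Step.h, Step.u]).flatten

/-- An S-Motzkin path with n up, n down, n horizontal steps:
a Motzkin path whose subword of non-down steps is (hu)^n. -/
def IsSMotzkin (n : ℕ) (w : List Step) : Prop :=
  IsMotzkin w ∧ w.count Step.u = n ∧ w.count Step.d = n ∧ w.count Step.h = n ∧
    w.filter (fun s => s ≠ Step.d) = huWord n

/-- A nonempty word over {h, u}. -/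
def HUBlock (A : List Step) : Prop := A ≠ [] ∧ ∀ s ∈ A, s = Step.h ∨ s = Step.u

/-- Glue blocks A_i with runs of d_i down steps: A_0 d^{d_1} A_1 d^{d_2} ... -/
def joinAM (As : List (List Step)) (ds : List ℕ) : List Step :=
  (List.zipWith (fun A k => A ++ List.replicate k Step.d) As ds).flatten

/-- w decomposes as A_0 D_1 A_1 D_2 ... A_{t-1} D_t with A_i nonempty over {h,u}
and D_i nonempty runs of down steps. -/
def AMDecomp (w : List Step) (As : List (List Step)) (ds : List ℕ) : Prop :=
  As.length = ds.length ∧ (∀ A ∈ As, HUBlock A) ∧ (∀ k ∈ ds, 0 < k) ∧ w = joinAM As ds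

/-- An Asinowski–Mansour path with n up, n down, n horizontal steps. -/
def IsAM (n : ℕ) (w : List Step) : Prop :=
  IsMotzkin w ∧ w.count Step.u = n ∧ w.count Step.d = n ∧ w.count Step.h = n ∧
    ∃ As ds, AMDecomp w As ds

/-- A Dyck path with n up and n down steps, encoded over the alphabet Step. -/
def IsDyck (n : ℕ) (w : List Step) : Prop :=
  (∀ s ∈ w, s = Step.u ∨ s = Step.d) ∧ w.count Step.u = n ∧ w.count Step.d = n ∧
    NonnegPrefixes w

/-- Height of the path at the start of step i. -/
def heightAt (w : List Step) (i : ℕ) : ℤ := hsum (w.take i)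

/-- Two horizontal steps at positions i < j, at the same height, with all steps
strictly between them at or above that height. -/
def Matched (w : List Step) (i j : ℕ) : Prop :=
  i < j ∧ w[i]? = some Step.h ∧ w[j]? = some Step.h ∧
    heightAt w i = heightAt w j ∧ ∀ k, i < k → k < j → heightAt w i ≤ heightAt w k

/-- Positions of the horizontal steps of w, from left to right. -/
def hPositions (w : List Step) : List ℕ := List.findIdxs (fun s => s = Step.h) w

/-- Lexicographic (weak) order on lists of naturals. -/
def LexLe (l l' : List ℕ) : Prop := l = l' ∨ List.Lex (· < ·) l l'

/-- w is an S-Motzkin word obtained by inserting horizontal steps into D. -/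
def ValidIns (D w : List Step) : Prop :=
  (∃ m, IsSMotzkin m w) ∧ w.filter (fun s => s ≠ Step.h) = D

/-- w is the greedy h-insertion into D: each h leftmost, i.e. the list of positions
of the h's is lexicographically minimal among all valid insertions. -/
def GreedyFor (D w : List Step) : Prop :=
  ValidIns D w ∧ ∀ w', ValidIns D w' → LexLe (hPositions w) (hPositions w')


lemma hsum_append (a b : List Step) : hsum (a ++ b) = hsum a + hsum b := by
  simp [hsum]

lemma huWord_succ (n : ℕ) : huWord (n + 1) = Step.h :: Step.u :: huWord n := by
  simp [huWord, List.replicate_succ]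

lemma huWord_add (a b : ℕ) : huWord (a + b) = huWord a ++ huWord b := by
  induction a with
  | zero => simp [huWord]
  | succ k ih =>
    have h1 : k + 1 + b = (k + b) + 1 := by omega
    rw [h1, huWord_succ, huWord_succ, ih]
    simp

lemma huWord_length (n : ℕ) : (huWord n).length = 2 * n := by
  induction n with
  | zero => simp [huWord]
  | succ k ih =>
    rw [huWord_succ, List.length_cons, List.length_cons, ih]; omega

lemma prefix_append_cases {α : Type*} {p x y : List α} (hp : p <+: x ++ y) :
    p <+: x ∨ ∃ q, p = x ++ q ∧ q <+: y := by
  obtain ⟨r, hr⟩ := hp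
  rcases List.append_eq_append_iff.mp hr with ⟨a', ha1, _⟩ | ⟨c', hc1, hc2⟩
  · exact Or.inl ⟨a', ha1.symm⟩
  · exact Or.inr ⟨c', hc1, ⟨r, hc2.symm⟩⟩

lemma nonneg_mid {P1 P2 Q : List Step} (hP : NonnegPrefixes (P1 ++ P2))
    (hQn : NonnegPrefixes Q) (hQ0 : hsum Q = 0) :
    NonnegPrefixes (P1 ++ Q ++ P2) := by
  intro p hp
  rcases prefix_append_cases hp with h1 | ⟨q, rfl, hq⟩
  · rcases prefix_append_cases h1 with h2 | ⟨r, rfl, hr⟩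
    · exact hP _ (h2.trans (List.prefix_append _ _))
    · rw [hsum_append]
      have hP1 : 0 ≤ hsum P1 := hP _ (List.prefix_append _ _)
      have := hQn _ hr
      omega
  · rw [hsum_append, hsum_append, hQ0]
    obtain ⟨r, hr⟩ := hq
    have : 0 ≤ hsum (P1 ++ q) := hP _ ⟨r, by rw [List.append_assoc, hr]⟩
    rw [hsum_append] at this
    omega

lemma prefix_huWord (m : ℕ) : ∀ A : List Step, A <+: huWord m →
    A.getLast? = some Step.u → ∃ j ≤ m, A = huWord j := by
  induction m with
  | zero =>
    intro A hA hl
    have : A = [] := List.prefix_nil.mp (by simpa [huWord] using hA)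
    simp [this] at hl
  | succ n ih =>
    intro A hA hl
    rw [huWord_succ] at hA
    match A, hA, hl with
    | [], _, hl => simp at hl
    | [a], hA, hl =>
      have := (List.cons_prefix_cons.mp hA).1
      subst this
      simp at hl
    | a :: b :: A', hA, hl =>
      obtain ⟨ha, hA2⟩ := List.cons_prefix_cons.mp hA
      obtain ⟨hb, hA3⟩ := List.cons_prefix_cons.mp hA2
      subst ha; subst hb
      rcases A' with _ | ⟨c, A''⟩
      · exact ⟨1, by omega, by simp [huWord]⟩
      · have hl' : (c :: A'').getLast? = some Step.u := by
          rw [List.getLast?_cons_cons, List.getLast?_cons_cons] at hl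
          exact hl
        obtain ⟨j, hj, hEq⟩ := ih _ hA3 hl'
        exact ⟨j + 1, by omega, by rw [huWord_succ, hEq]⟩

lemma filter_getLast_u {l : List Step} (h : l.getLast? = some Step.u) :
    (l.filter (fun s => s ≠ Step.d)).getLast? = some Step.u := by
  rcases List.eq_nil_or_concat l with rfl | ⟨l', a, rfl⟩
  · simp at h
  · rw [List.concat_eq_append] at h ⊢
    rw [List.getLast?_concat] at h
    obtain rfl : a = Step.u := by injection h
    rw [List.filter_append]
    simp

lemma smotzkin_mid (m m' j : ℕ) (P1 P2 Q : List Step)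
    (hP : IsSMotzkin m (P1 ++ P2)) (hQ : IsSMotzkin m' Q)
    (hfil : P1.filter (fun s => s ≠ Step.d) = huWord j) :
    IsSMotzkin (m + m') (P1 ++ Q ++ P2) := by
  obtain ⟨⟨hPn, hP0⟩, hPu, hPd, hPh, hPf⟩ := hP
  obtain ⟨⟨hQn, hQ0⟩, hQu, hQd, hQh, hQf⟩ := hQ
  rw [List.filter_append, hfil] at hPf
  have hjm : j ≤ m := by
    have := congrArg List.length hPf
    simp [huWord_length] at this
    omega
  have hP2f : P2.filter (fun s => s ≠ Step.d) = huWord (m - j) := by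
    have : huWord m = huWord j ++ huWord (m - j) := by
      rw [← huWord_add]; congr 1; omega
    rw [this] at hPf
    exact List.append_cancel_left hPf
  refine ⟨⟨nonneg_mid hPn hQn hQ0, ?_⟩, ?_, ?_, ?_, ?_⟩
  · rw [hsum_append, hsum_append, hQ0]
    rw [hsum_append] at hP0
    omega
  · simp only [List.count_append] at hPu ⊢; omega
  · simp only [List.count_append] at hPd ⊢; omega
  · simp only [List.count_append] at hPh ⊢; omega
  · rw [List.filter_append, List.filter_append, hfil, hQf, hP2f]
    rw [← huWord_add, ← huWord_add]
    congr 1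
    omega

/-- inserting an S-Motzkin path Q into an S-Motzkin path P immediately
after the k-th up step of P (1 ≤ k ≤ number of up steps of P), or appending Q at the
end of P, yields again an S-Motzkin path. -/
theorem smotzkin_insertion (m m' k : ℕ) (P Q P1 P2 : List Step)
    (hP : IsSMotzkin m P) (hQ : IsSMotzkin m' Q)
    (hsplit : P = P1 ++ P2) (hk1 : 1 ≤ k) (hk2 : k ≤ P.count Step.u)
    (hcount : P1.count Step.u = k) (hlast : P1.getLast? = some Step.u) :
    IsSMotzkin (m + m') (P1 ++ Q ++ P2) ∧ IsSMotzkin (m + m') (P ++ Q) := by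
  -- filter structure of P1
  obtain ⟨⟨hPn, hP0⟩, hPu, hPd, hPh, hPf⟩ := hP
  have hP' : IsSMotzkin m P := ⟨⟨hPn, hP0⟩, hPu, hPd, hPh, hPf⟩
  have hP1pre : P1.filter (fun s => s ≠ Step.d) <+: huWord m := by
    rw [← hPf, hsplit, List.filter_append]
    exact List.prefix_append _ _
  obtain ⟨j, hj, hjEq⟩ := prefix_huWord m _ hP1pre (filter_getLast_u hlast)
  constructor
  · exact smotzkin_mid m m' j P1 P2 Q (hsplit ▸ hP') hQ hjEq
  · have h1 : IsSMotzkin (m + m') (P ++ Q ++ []) := by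
      refine smotzkin_mid m m' m P [] Q (by simpa using hP') hQ ?_
      simpa using hPf
    simpa using h1
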